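/- Let G be a group, K a subgroup, and σ a k[K]-module for a field k. Then End_{k[G]}(c-Ind_K^G σ) is isomorphic as a k-vector space to ⊕_{t ∈ K\G/K} Hom_{k[K]}(σ, σ(t)), where σ(t) is the subspace of c-Ind_K^G(σ) of functions supported on the double coset KtK. -/

import Mathlib

variable (k : Type) [CommRing k] {G : Type} [Group G] (K : Subgroup G)
  {V : Type} [AddCommGroup V] [Module k V]

/-- The defining property of elements of the compact induction `c-Ind_K^G σ`:
`K`-equivariant functions `G → V` supported on finitely many right cosets `Kg`. -/
def IsCIndFn (ρ : Representation k ↥K V) (f : G → V) : Prop :=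
  (∀ (h : ↥K) (g : G), f (↑h * g) = ρ h (f g)) ∧
    Set.Finite (Quotient.mk (QuotientGroup.rightRel K) '' {g : G | f g ≠ 0})

/-- Compact induction `c-Ind_K^G σ` as a `k`-submodule of `G → V`. -/
def cInd (ρ : Representation k ↥K V) : Submodule k (G → V) where
  carrier := {f | IsCIndFn k K ρ f}
  add_mem' := by
    rintro f g ⟨hf1, hf2⟩ ⟨hg1, hg2⟩
    refine ⟨fun h x => by simp [hf1, hg1], ?_⟩
    refine Set.Finite.subset (hf2.union hg2) ?_
    rw [← Set.image_union]
    refine Set.image_mono ?_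
    intro x hx
    by_contra hc
    simp only [Set.mem_union, Set.mem_setOf_eq, not_or, not_not] at hc
    exact hx (by simp [Pi.add_apply, hc.1, hc.2])
  zero_mem' := ⟨fun h g => by simp, by simp⟩
  smul_mem' := by
    rintro c f ⟨hf1, hf2⟩
    refine ⟨fun h x => by simp [hf1], ?_⟩
    refine hf2.subset (Set.image_mono ?_)
    intro x hx h0
    exact hx (by simp [h0])

theorem cInd_translate_mem (ρ : Representation k ↥K V) (g : G) (f : G → V)
    (hf : f ∈ cInd k K ρ) : (fun x => f (x * g)) ∈ cInd k K ρ := by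
  obtain ⟨h1, h2⟩ := hf
  constructor
  · intro h x
    show f (↑h * x * g) = _
    rw [mul_assoc]
    exact h1 h (x * g)
  · have hresp : ∀ a b : G, (QuotientGroup.rightRel K) a b →
        (Quotient.mk (QuotientGroup.rightRel K) (a * g⁻¹) : Quotient (QuotientGroup.rightRel K))
          = Quotient.mk (QuotientGroup.rightRel K) (b * g⁻¹) := by
      intro a b hab
      refine Quotient.sound ?_
      have hab' : b * a⁻¹ ∈ K := QuotientGroup.rightRel_apply.mp hab
      refine QuotientGroup.rightRel_apply.mpr ?_
      simpa [mul_assoc] using hab'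
    have key : Quotient.mk (QuotientGroup.rightRel K) '' {x : G | f (x * g) ≠ 0}
        ⊆ (Quotient.lift (fun y : G => Quotient.mk (QuotientGroup.rightRel K) (y * g⁻¹)) hresp) ''
          (Quotient.mk (QuotientGroup.rightRel K) '' {y : G | f y ≠ 0}) := by
      rintro q ⟨x, hx, rfl⟩
      exact ⟨Quotient.mk _ (x * g), ⟨x * g, hx, rfl⟩, by simp⟩
    exact ((h2.image _).subset key)

/-- The representation of `G` on `c-Ind_K^G σ` by right translation. -/
def cIndRep (ρ : Representation k ↥K V) : Representation k G ↥(cInd k K ρ) where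
  toFun g :=
    { toFun := fun f => ⟨fun x => (f : G → V) (x * g), cInd_translate_mem k K ρ g _ f.2⟩
      map_add' := fun f₁ f₂ => Subtype.ext (funext fun x => rfl)
      map_smul' := fun c f => Subtype.ext (funext fun x => rfl) }
  map_one' := LinearMap.ext fun f => Subtype.ext (funext fun x => by simp)
  map_mul' := fun g₁ g₂ => LinearMap.ext fun f => Subtype.ext (funext fun x => by
    simp [mul_assoc])

/-- Functoriality of compact induction in the coefficient representation. -/
def cIndMap {W : Type} [AddCommGroup W] [Module k W]
    (ρ : Representation k ↥K V) (ρ' : Representation k ↥K W)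
    (φ : V →ₗ[k] W) (hφ : ∀ (h : ↥K) (v : V), φ (ρ h v) = ρ' h (φ v)) :
    ↥(cInd k K ρ) →ₗ[k] ↥(cInd k K ρ') where
  toFun f := ⟨fun x => φ ((f : G → V) x), by
    obtain ⟨h1, h2⟩ := f.2
    constructor
    · intro h x
      show φ ((f : G → V) (↑h * x)) = _
      rw [h1, hφ]
    · refine h2.subset (Set.image_mono ?_)
      intro x hx h0
      exact hx (by simp [h0])⟩
  map_add' f₁ f₂ := Subtype.ext (funext fun x => by simp)
  map_smul' c f := Subtype.ext (funext fun x => by simp)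

/-- The subspace `σ(t)` of `c-Ind_K^G σ` of functions supported on the double coset
indexed by `q ∈ K\G/K`. -/
def dosetPart (ρ : Representation k ↥K V) (q : DoubleCoset.Quotient (↑K : Set G) ↑K) :
    Submodule k ↥(cInd k K ρ) where
  carrier := {f | ∀ x : G, (f : G → V) x ≠ 0 → Quotient.mk (DoubleCoset.setoid ↑K ↑K) x = q}
  add_mem' := by
    intro f g hf hg x hx
    by_cases h1 : (f : G → V) x ≠ 0
    · exact hf x h1
    · push_neg at h1
      refine hg x ?_
      intro h2
      exact hx (by simp [Submodule.coe_add, Pi.add_apply, h1, h2])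
  zero_mem' := by intro x hx; simp at hx
  smul_mem' := by
    intro c f hf x hx
    refine hf x ?_
    intro h0
    exact hx (by simp [h0])

/-- The space `Hom_K(σ, σ(q))` of `K`-equivariant maps from `σ` into the functions
supported on the double coset `q`. -/
def homKPart (ρ : Representation k ↥K V) (q : DoubleCoset.Quotient (↑K : Set G) ↑K) :
    Submodule k (V →ₗ[k] ↥(cInd k K ρ)) where
  carrier := {φ | (∀ v : V, φ v ∈ dosetPart k K ρ q) ∧
    ∀ (h : ↥K) (v : V), φ (ρ h v) = cIndRep k K ρ ↑h (φ v)}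
  add_mem' := by
    rintro φ ψ ⟨hφ1, hφ2⟩ ⟨hψ1, hψ2⟩
    exact ⟨fun v => (dosetPart k K ρ q).add_mem (hφ1 v) (hψ1 v),
      fun h v => by simp [hφ2 h v, hψ2 h v]⟩
  zero_mem' := ⟨fun v => (dosetPart k K ρ q).zero_mem, fun h v => by simp⟩
  smul_mem' := by
    rintro c φ ⟨hφ1, hφ2⟩
    exact ⟨fun v => (dosetPart k K ρ q).smul_mem c (hφ1 v),
      fun h v => by simp [hφ2 h v]⟩

/-- The `G`-equivariant endomorphisms of `c-Ind_K^G σ`. -/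
def endG (ρ : Representation k ↥K V) :
    Submodule k (↥(cInd k K ρ) →ₗ[k] ↥(cInd k K ρ)) where
  carrier := {T | ∀ (g : G) (f : ↥(cInd k K ρ)), T (cIndRep k K ρ g f) = cIndRep k K ρ g (T f)}
  add_mem' := by intro T S hT hS g f; simp [hT g f, hS g f]
  zero_mem' := by intro g f; simp
  smul_mem' := by intro c T hT g f; simp [hT g f]

namespace Stmt16Aux

open scoped Classical

/-- Right coset quotient. -/
abbrev QK (K : Subgroup G) := Quotient (QuotientGroup.rightRel K)

/-- Double coset quotient. -/
abbrev DK (K : Subgroup G) := DoubleCoset.Quotient (↑K : Set G) (↑K : Set G)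

/-- mk onto right cosets -/
abbrev rmk (K : Subgroup G) (x : G) : QK K := Quotient.mk (QuotientGroup.rightRel K) x

/-- mk onto double cosets -/
abbrev dmk (K : Subgroup G) (x : G) : DK K := Quotient.mk (DoubleCoset.setoid (↑K : Set G) ↑K) x

theorem rmk_out (c : QK K) : rmk K (Quotient.out c) = c := Quotient.out_eq c

theorem exists_of_rmk_eq {K : Subgroup G} {a b : G} (h : rmk K a = rmk K b) :
    ∃ u : ↥K, b = ↑u * a := by
  have := QuotientGroup.rightRel_apply.mp (Quotient.exact h)
  exact ⟨⟨b * a⁻¹, this⟩, by group⟩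

theorem dmk_mul_left (K : Subgroup G) (u : ↥K) (x : G) : dmk K (↑u * x) = dmk K x :=
  Quotient.sound (DoubleCoset.rel_iff.mpr ⟨(↑u)⁻¹, K.inv_mem u.2, 1, K.one_mem, by group⟩)

theorem dmk_mul_right (K : Subgroup G) (x : G) (u : ↥K) : dmk K (x * ↑u) = dmk K x :=
  Quotient.sound (DoubleCoset.rel_iff.mpr ⟨1, K.one_mem, (↑u)⁻¹, K.inv_mem u.2, by group⟩)

theorem dmk_eq_of_rmk_eq {K : Subgroup G} {a b : G} (h : rmk K a = rmk K b) :
    dmk K a = dmk K b := by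
  obtain ⟨u, rfl⟩ := exists_of_rmk_eq h
  exact (dmk_mul_left K u a).symm

/-- The projection from right cosets to double cosets. -/
def rToD (K : Subgroup G) : QK K → DK K :=
  Quotient.lift (dmk K) fun a b hab => dmk_eq_of_rmk_eq (Quotient.sound hab)

theorem rToD_rmk (K : Subgroup G) (x : G) : rToD K (rmk K x) = dmk K x := rfl

theorem dsupp_finite (ρ : Representation k ↥K V) (f : ↥(cInd k K ρ)) :
    (dmk K '' {x : G | (f : G → V) x ≠ 0}).Finite := by
  have h2 := f.2.2
  refine (h2.image (rToD K)).subset ?_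
  rintro q ⟨x, hx, rfl⟩
  exact ⟨rmk K x, ⟨x, hx, rfl⟩, rfl⟩

theorem rsupp_out_finite (ρ : Representation k ↥K V) (f : ↥(cInd k K ρ)) :
    {c : QK K | (f : G → V) (Quotient.out c) ≠ 0}.Finite := by
  refine f.2.2.subset ?_
  intro c hc
  exact ⟨Quotient.out c, hc, rmk_out K c⟩

/-- Extension of `v` to a function supported on `K`. -/
noncomputable def extFn (ρ : Representation k ↥K V) (v : V) : G → V :=
  fun x => if h : x ∈ K then ρ ⟨x, h⟩ v else 0

theorem extFn_mem (ρ : Representation k ↥K V) (v : V) : extFn k K ρ v ∈ cInd k K ρ := by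
  constructor
  · intro u x
    unfold extFn
    by_cases hx : x ∈ K
    · rw [dif_pos (K.mul_mem u.2 hx), dif_pos hx]
      have : (⟨↑u * x, K.mul_mem u.2 hx⟩ : ↥K) = u * ⟨x, hx⟩ := rfl
      rw [this, map_mul]
      rfl
    · rw [dif_neg hx, dif_neg (fun hc => hx (by simpa using K.mul_mem (K.inv_mem u.2) hc)),
        map_zero]
  · refine (Set.finite_singleton (rmk K 1)).subset ?_
    rintro q ⟨x, hx, rfl⟩
    have hxK : x ∈ K := by
      by_contra hc
      exact hx (by simp [extFn, dif_neg hc])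
    refine Set.mem_singleton_iff.mpr (Quotient.sound ?_)
    exact QuotientGroup.rightRel_apply.mpr (by simpa using K.inv_mem hxK)

/-- Extension as a linear map `V →ₗ c-Ind`. -/
noncomputable def extL (ρ : Representation k ↥K V) : V →ₗ[k] ↥(cInd k K ρ) where
  toFun v := ⟨extFn k K ρ v, extFn_mem k K ρ v⟩
  map_add' v w := Subtype.ext (funext fun x => by
    unfold extFn; by_cases hx : x ∈ K <;> simp [hx])
  map_smul' c v := Subtype.ext (funext fun x => by
    unfold extFn; by_cases hx : x ∈ K <;> simp [hx])

theorem extL_equivariant (ρ : Representation k ↥K V) (u : ↥K) (v : V) :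
    extL k K ρ (ρ u v) = cIndRep k K ρ ↑u (extL k K ρ v) := by
  refine Subtype.ext (funext fun x => ?_)
  show extFn k K ρ (ρ u v) x = extFn k K ρ v (x * ↑u)
  unfold extFn
  by_cases hx : x ∈ K
  · rw [dif_pos hx, dif_pos (K.mul_mem hx u.2)]
    have : (⟨x * ↑u, K.mul_mem hx u.2⟩ : ↥K) = ⟨x, hx⟩ * u := rfl
    rw [this, map_mul]
    rfl
  · rw [dif_neg hx, dif_neg (fun hc => hx (by simpa using K.mul_mem hc (K.inv_mem u.2)))]

/-- The component of `f` supported on the double coset `q`. -/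
noncomputable def compFn (ρ : Representation k ↥K V) (q : DK K) (f : ↥(cInd k K ρ)) : G → V :=
  fun x => if dmk K x = q then (f : G → V) x else 0

theorem compFn_mem (ρ : Representation k ↥K V) (q : DK K) (f : ↥(cInd k K ρ)) :
    compFn k K ρ q f ∈ cInd k K ρ := by
  constructor
  · intro u x
    unfold compFn
    rw [dmk_mul_left K u x]
    by_cases hq : dmk K x = q
    · rw [if_pos hq, if_pos hq, f.2.1]
    · rw [if_neg hq, if_neg hq, map_zero]
  · refine f.2.2.subset (Set.image_mono ?_)
    intro x hx h0
    exact hx (by simp [compFn, h0])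

/-- The component map as a linear endomorphism of `c-Ind`. -/
noncomputable def compL (ρ : Representation k ↥K V) (q : DK K) : ↥(cInd k K ρ) →ₗ[k] ↥(cInd k K ρ) where
  toFun f := ⟨compFn k K ρ q f, compFn_mem k K ρ q f⟩
  map_add' f g := Subtype.ext (funext fun x => by
    unfold compFn; by_cases hq : dmk K x = q <;> simp [hq])
  map_smul' c f := Subtype.ext (funext fun x => by
    unfold compFn; by_cases hq : dmk K x = q <;> simp [hq])

theorem compL_apply (ρ : Representation k ↥K V) (q : DK K) (f : ↥(cInd k K ρ)) (x : G) :
    ((compL k K ρ q f : ↥(cInd k K ρ)) : G → V) x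
      = if dmk K x = q then (f : G → V) x else 0 := rfl

theorem compL_mem_dosetPart (ρ : Representation k ↥K V) (q : DK K) (f : ↥(cInd k K ρ)) :
    compL k K ρ q f ∈ dosetPart k K ρ q := by
  intro x hx
  rw [compL_apply] at hx
  by_cases hq : dmk K x = q
  · exact hq
  · exact absurd rfl (by rwa [if_neg hq] at hx)

theorem compL_eq_self (ρ : Representation k ↥K V) (q : DK K) (f : ↥(cInd k K ρ))
    (hf : f ∈ dosetPart k K ρ q) : compL k K ρ q f = f := by
  refine Subtype.ext (funext fun x => ?_)
  rw [compL_apply]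
  by_cases hq : dmk K x = q
  · rw [if_pos hq]
  · rw [if_neg hq]
    by_contra h0
    exact hq (hf x fun hc => h0 hc.symm)

theorem compL_eq_zero (ρ : Representation k ↥K V) {q q' : DK K} (hne : q' ≠ q)
    (f : ↥(cInd k K ρ)) (hf : f ∈ dosetPart k K ρ q') : compL k K ρ q f = 0 := by
  refine Subtype.ext (funext fun x => ?_)
  rw [compL_apply]
  by_cases hq : dmk K x = q
  · rw [if_pos hq]
    by_contra h0
    exact hne ((hf x h0).symm.trans hq)
  · rw [if_neg hq]
    rfl

theorem compL_eq_zero_of_not_mem (ρ : Representation k ↥K V) (q : DK K) (f : ↥(cInd k K ρ))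
    (h : q ∉ dmk K '' {x : G | (f : G → V) x ≠ 0}) : compL k K ρ q f = 0 := by
  refine Subtype.ext (funext fun x => ?_)
  rw [compL_apply]
  by_cases hq : dmk K x = q
  · rw [if_pos hq]
    by_contra h0
    exact h ⟨x, h0, hq⟩
  · rw [if_neg hq]
    rfl

theorem compL_equivariant (ρ : Representation k ↥K V) (q : DK K) (u : ↥K) (f : ↥(cInd k K ρ)) :
    compL k K ρ q (cIndRep k K ρ ↑u f) = cIndRep k K ρ ↑u (compL k K ρ q f) := by
  refine Subtype.ext (funext fun x => ?_)
  show (if dmk K x = q then (f : G → V) (x * ↑u) else 0)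
    = (if dmk K (x * ↑u) = q then (f : G → V) (x * ↑u) else 0)
  rw [dmk_mul_right K x u]

theorem sum_compL (ρ : Representation k ↥K V) (f : ↥(cInd k K ρ)) (S : Finset (DK K))
    (hS : ∀ q ∈ dmk K '' {x : G | (f : G → V) x ≠ 0}, q ∈ S) :
    ∑ q ∈ S, compL k K ρ q f = f := by
  refine Subtype.ext (funext fun x => ?_)
  have hcoe : ((∑ q ∈ S, compL k K ρ q f : ↥(cInd k K ρ)) : G → V)
      = ∑ q ∈ S, ((compL k K ρ q f : ↥(cInd k K ρ)) : G → V) := by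
    simp
  rw [hcoe]
  rw [Finset.sum_apply]
  simp only [compL_apply]
  rw [Finset.sum_ite_eq S (dmk K x) (fun _ => (f : G → V) x)]
  by_cases hx : (f : G → V) x = 0
  · simp [hx]
  · rw [if_pos (hS _ ⟨x, hx, rfl⟩)]

section TL

/-- The candidate endomorphism attached to `Φ : V →ₗ cInd`, as a raw function. -/
noncomputable def TFun (ρ : Representation k ↥K V) (Φ : V →ₗ[k] ↥(cInd k K ρ))
    (f : ↥(cInd k K ρ)) : G → V :=
  fun x => ∑ᶠ c : QK K,
    ((Φ ((f : G → V) (Quotient.out c)) : ↥(cInd k K ρ)) : G → V) (x * (Quotient.out c)⁻¹)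

theorem TFun_eq_sum (ρ : Representation k ↥K V) (Φ : V →ₗ[k] ↥(cInd k K ρ))
    (f : ↥(cInd k K ρ)) (S : Finset (QK K))
    (hS : ∀ c : QK K, (f : G → V) (Quotient.out c) ≠ 0 → c ∈ S) (x : G) :
    TFun k K ρ Φ f x = ∑ c ∈ S,
      ((Φ ((f : G → V) (Quotient.out c)) : ↥(cInd k K ρ)) : G → V) (x * (Quotient.out c)⁻¹) := by
  refine finsum_eq_sum_of_support_subset _ ?_
  intro c hc
  simp only [Function.mem_support] at hc
  refine hS c ?_
  intro h0
  rw [h0] at hc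
  simp at hc

theorem TFun_mem (ρ : Representation k ↥K V) (Φ : V →ₗ[k] ↥(cInd k K ρ))
    (f : ↥(cInd k K ρ)) : TFun k K ρ Φ f ∈ cInd k K ρ := by
  set S : Finset (QK K) := (rsupp_out_finite k K ρ f).toFinset with hSdef
  have hS : ∀ c : QK K, (f : G → V) (Quotient.out c) ≠ 0 → c ∈ S := by
    intro c hc
    exact (rsupp_out_finite k K ρ f).mem_toFinset.mpr hc
  constructor
  · intro u x
    rw [TFun_eq_sum k K ρ Φ f S hS, TFun_eq_sum k K ρ Φ f S hS, map_sum]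
    refine Finset.sum_congr rfl fun c _ => ?_
    have := (Φ ((f : G → V) (Quotient.out c))).2.1 u (x * (Quotient.out c)⁻¹)
    rw [← this, mul_assoc]
  · have key : {x : G | TFun k K ρ Φ f x ≠ 0} ⊆
        ⋃ c ∈ (S : Set (QK K)), {x : G |
          ((Φ ((f : G → V) (Quotient.out c)) : ↥(cInd k K ρ)) : G → V)
            (x * (Quotient.out c)⁻¹) ≠ 0} := by
      intro x hx
      rw [Set.mem_setOf_eq, TFun_eq_sum k K ρ Φ f S hS] at hx
      obtain ⟨c, hc, hne⟩ := Finset.exists_ne_zero_of_sum_ne_zero hx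
      exact Set.mem_biUnion hc hne
    have himg : Quotient.mk (QuotientGroup.rightRel K) '' {x : G | TFun k K ρ Φ f x ≠ 0} ⊆
        ⋃ c ∈ (S : Set (QK K)), Quotient.mk (QuotientGroup.rightRel K) '' {x : G |
          ((Φ ((f : G → V) (Quotient.out c)) : ↥(cInd k K ρ)) : G → V)
            (x * (Quotient.out c)⁻¹) ≠ 0} := by
      rintro q ⟨x, hx, rfl⟩
      obtain ⟨s, hs, hxs⟩ := Set.mem_iUnion₂.mp (key hx)
      exact Set.mem_biUnion hs ⟨x, hxs, rfl⟩
    refine (Set.Finite.biUnion S.finite_toSet fun c _ => ?_).subset himg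
    exact (cInd_translate_mem k K ρ (Quotient.out c)⁻¹ _
      (Φ ((f : G → V) (Quotient.out c))).2).2

/-- The candidate endomorphism as a linear map. -/
noncomputable def TL (ρ : Representation k ↥K V) (Φ : V →ₗ[k] ↥(cInd k K ρ)) :
    ↥(cInd k K ρ) →ₗ[k] ↥(cInd k K ρ) where
  toFun f := ⟨TFun k K ρ Φ f, TFun_mem k K ρ Φ f⟩
  map_add' f g := by
    refine Subtype.ext (funext fun x => ?_)
    have hf := (rsupp_out_finite k K ρ f)
    have hg := (rsupp_out_finite k K ρ g)
    set S : Finset (QK K) := (hf.union hg).toFinset with hSdef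
    have hSf : ∀ c : QK K, (f : G → V) (Quotient.out c) ≠ 0 → c ∈ S := fun c hc =>
      (hf.union hg).mem_toFinset.mpr (Or.inl hc)
    have hSg : ∀ c : QK K, (g : G → V) (Quotient.out c) ≠ 0 → c ∈ S := fun c hc =>
      (hf.union hg).mem_toFinset.mpr (Or.inr hc)
    have hSfg : ∀ c : QK K, ((f + g : ↥(cInd k K ρ)) : G → V) (Quotient.out c) ≠ 0 → c ∈ S := by
      intro c hc
      by_cases h1 : (f : G → V) (Quotient.out c) ≠ 0
      · exact hSf c h1
      · push_neg at h1
        refine hSg c fun h2 => hc ?_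
        show (f : G → V) _ + (g : G → V) _ = 0
        rw [h1, h2, add_zero]
    show TFun k K ρ Φ (f + g) x = TFun k K ρ Φ f x + TFun k K ρ Φ g x
    rw [TFun_eq_sum k K ρ Φ _ S hSfg, TFun_eq_sum k K ρ Φ f S hSf,
      TFun_eq_sum k K ρ Φ g S hSg, ← Finset.sum_add_distrib]
    refine Finset.sum_congr rfl fun c _ => ?_
    have : ((f + g : ↥(cInd k K ρ)) : G → V) (Quotient.out c)
        = (f : G → V) (Quotient.out c) + (g : G → V) (Quotient.out c) := rfl
    rw [this, map_add]
    rfl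
  map_smul' a f := by
    refine Subtype.ext (funext fun x => ?_)
    have hf := (rsupp_out_finite k K ρ f)
    set S : Finset (QK K) := hf.toFinset with hSdef
    have hSf : ∀ c : QK K, (f : G → V) (Quotient.out c) ≠ 0 → c ∈ S := fun c hc =>
      hf.mem_toFinset.mpr hc
    have hSaf : ∀ c : QK K, ((a • f : ↥(cInd k K ρ)) : G → V) (Quotient.out c) ≠ 0 → c ∈ S := by
      intro c hc
      refine hSf c fun h1 => hc ?_
      show a • (f : G → V) (Quotient.out c) = 0
      rw [h1, smul_zero]
    show TFun k K ρ Φ (a • f) x = a • TFun k K ρ Φ f x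
    rw [TFun_eq_sum k K ρ Φ _ S hSaf, TFun_eq_sum k K ρ Φ f S hSf, Finset.smul_sum]
    refine Finset.sum_congr rfl fun c _ => ?_
    have : ((a • f : ↥(cInd k K ρ)) : G → V) (Quotient.out c)
        = a • (f : G → V) (Quotient.out c) := rfl
    rw [this, map_smul]
    rfl

theorem TL_apply (ρ : Representation k ↥K V) (Φ : V →ₗ[k] ↥(cInd k K ρ))
    (f : ↥(cInd k K ρ)) (x : G) :
    ((TL k K ρ Φ f : ↥(cInd k K ρ)) : G → V) x = TFun k K ρ Φ f x := rfl

end TL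

theorem rho_ne_zero (ρ : Representation k ↥K V) (u : ↥K) {v : V} (hv : v ≠ 0) :
    ρ u v ≠ 0 := by
  intro h0
  refine hv ?_
  have : ρ u⁻¹ (ρ u v) = v := by
    rw [← Module.End.mul_apply, ← map_mul, inv_mul_cancel, map_one, Module.End.one_apply]
  rw [← this, h0, map_zero]

/-- Right multiplication on the right coset space. -/
def rmul (K : Subgroup G) (g : G) : QK K → QK K :=
  Quotient.map (· * g) (fun a b hab => by
    have h := QuotientGroup.rightRel_apply.mp hab
    exact QuotientGroup.rightRel_apply.mpr (by simpa [mul_assoc] using h))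

theorem rmul_rmk (K : Subgroup G) (g x : G) : rmul K g (rmk K x) = rmk K (x * g) := rfl

theorem rmul_rmul_inv (K : Subgroup G) (g : G) (c : QK K) :
    rmul K g (rmul K g⁻¹ c) = c := by
  induction c using Quotient.inductionOn with
  | h a => rw [show (Quotient.mk (QuotientGroup.rightRel K) a : QK K) = rmk K a from rfl,
      rmul_rmk, rmul_rmk]; simp

theorem rmul_injective (K : Subgroup G) (g : G) : Function.Injective (rmul K g) := by
  intro a b hab
  rw [← rmul_rmul_inv K g⁻¹ a, ← rmul_rmul_inv K g⁻¹ b]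
  simp only [inv_inv, hab]

theorem TL_equivariant (ρ : Representation k ↥K V) (Φ : V →ₗ[k] ↥(cInd k K ρ))
    (hΦ : ∀ (u : ↥K) (v : V), Φ (ρ u v) = cIndRep k K ρ ↑u (Φ v)) (g : G)
    (f : ↥(cInd k K ρ)) :
    TL k K ρ Φ (cIndRep k K ρ g f) = cIndRep k K ρ g (TL k K ρ Φ f) := by
  refine Subtype.ext (funext fun x => ?_)
  have hcoe : ∀ y : G, ((cIndRep k K ρ g f : ↥(cInd k K ρ)) : G → V) y
      = (f : G → V) (y * g) := fun y => rfl
  have hfin := rsupp_out_finite k K ρ (cIndRep k K ρ g f)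
  set S : Finset (QK K) := hfin.toFinset with hSdef
  have hS : ∀ c : QK K, ((cIndRep k K ρ g f : ↥(cInd k K ρ)) : G → V) (Quotient.out c) ≠ 0
      → c ∈ S := fun c hc => hfin.mem_toFinset.mpr hc
  have hS' : ∀ c : QK K, (f : G → V) (Quotient.out c) ≠ 0 → c ∈ S.image (rmul K g) := by
    intro c hc
    set c' := rmul K g⁻¹ c with hc'
    have hgc' : rmul K g c' = c := rmul_rmul_inv K g c
    refine Finset.mem_image.mpr ⟨c', ?_, hgc'⟩
    refine hS c' ?_
    rw [hcoe]
    have hrmk : rmk K (Quotient.out c' * g) = rmk K (Quotient.out c) := by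
      rw [← rmul_rmk, rmk_out, hgc', rmk_out]
    obtain ⟨u, hu⟩ := exists_of_rmk_eq hrmk
    intro h0
    have : (f : G → V) (Quotient.out c) = 0 := by
      rw [hu, f.2.1, h0, map_zero]
    exact hc this
  show TFun k K ρ Φ (cIndRep k K ρ g f) x = TFun k K ρ Φ f (x * g)
  rw [TFun_eq_sum k K ρ Φ _ S hS x, TFun_eq_sum k K ρ Φ f (S.image (rmul K g)) hS' (x * g),
    Finset.sum_image (fun a _ b _ hab => rmul_injective K g hab)]
  refine Finset.sum_congr rfl fun c _ => ?_
  rw [hcoe]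
  -- termwise equality
  have hrmk : rmk K (Quotient.out (rmul K g c)) = rmk K (Quotient.out c * g) := by
    rw [rmk_out, ← rmul_rmk, rmk_out]
  obtain ⟨u, hu⟩ := exists_of_rmk_eq hrmk.symm
  have hval : (f : G → V) (Quotient.out (rmul K g c))
      = ρ u ((f : G → V) (Quotient.out c * g)) := by rw [hu, f.2.1]
  rw [hval, hΦ]
  show ((Φ ((f : G → V) (Quotient.out c * g)) : ↥(cInd k K ρ)) : G → V) (x * (Quotient.out c)⁻¹)
      = ((Φ ((f : G → V) (Quotient.out c * g)) : ↥(cInd k K ρ)) : G → V)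
        (x * g * (Quotient.out (rmul K g c))⁻¹ * ↑u)
  rw [hu]
  group

theorem f_eq_sum_translates (ρ : Representation k ↥K V) (f : ↥(cInd k K ρ))
    (S : Finset (QK K)) (hS : ∀ c : QK K, (f : G → V) (Quotient.out c) ≠ 0 → c ∈ S) :
    f = ∑ c ∈ S, cIndRep k K ρ (Quotient.out c)⁻¹
      (extL k K ρ ((f : G → V) (Quotient.out c))) := by
  refine Subtype.ext (funext fun y => ?_)
  have hcoe : ((∑ c ∈ S, cIndRep k K ρ (Quotient.out c)⁻¹
      (extL k K ρ ((f : G → V) (Quotient.out c))) : ↥(cInd k K ρ)) : G → V)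
      = ∑ c ∈ S, ((cIndRep k K ρ (Quotient.out c)⁻¹
        (extL k K ρ ((f : G → V) (Quotient.out c))) : ↥(cInd k K ρ)) : G → V) := by simp
  rw [hcoe, Finset.sum_apply]
  have hterm : ∀ c : QK K, ((cIndRep k K ρ (Quotient.out c)⁻¹
      (extL k K ρ ((f : G → V) (Quotient.out c))) : ↥(cInd k K ρ)) : G → V) y
      = if rmk K y = c then (f : G → V) y else 0 := by
    intro c
    show extFn k K ρ ((f : G → V) (Quotient.out c)) (y * (Quotient.out c)⁻¹) = _
    by_cases h : y * (Quotient.out c)⁻¹ ∈ K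
    · have hrmk : rmk K y = c := by
        rw [← rmk_out K c]
        refine Quotient.sound (QuotientGroup.rightRel_apply.mpr ?_)
        simpa using K.inv_mem h
      rw [if_pos hrmk]
      unfold extFn
      rw [dif_pos h]
      have := f.2.1 ⟨y * (Quotient.out c)⁻¹, h⟩ (Quotient.out c)
      simp only [inv_mul_cancel_right] at this
      rw [← this]
    · have hrmk : rmk K y ≠ c := by
        intro hc
        rw [← rmk_out K c] at hc
        have := QuotientGroup.rightRel_apply.mp (Quotient.exact hc)
        exact h (by simpa using K.inv_mem this)
      rw [if_neg hrmk]
      unfold extFn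
      rw [dif_neg h]
  simp only [hterm]
  rw [Finset.sum_ite_eq S (rmk K y) (fun _ => (f : G → V) y)]
  by_cases hy : rmk K y ∈ S
  · rw [if_pos hy]
  · rw [if_neg hy]
    by_contra h0
    refine hy (hS (rmk K y) ?_)
    obtain ⟨u, hu⟩ := exists_of_rmk_eq (rmk_out K (rmk K y)).symm
    rw [hu, f.2.1]
    exact rho_ne_zero k K ρ u fun hc => h0 (hc ▸ rfl)

theorem endG_eq_TL (ρ : Representation k ↥K V) (T : ↥(cInd k K ρ) →ₗ[k] ↥(cInd k K ρ))
    (hT : T ∈ endG k K ρ) : TL k K ρ (T ∘ₗ extL k K ρ) = T := by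
  refine LinearMap.ext fun f => Subtype.ext (funext fun x => ?_)
  have hfin := rsupp_out_finite k K ρ f
  set S : Finset (QK K) := hfin.toFinset with hSdef
  have hS : ∀ c : QK K, (f : G → V) (Quotient.out c) ≠ 0 → c ∈ S := fun c hc =>
    hfin.mem_toFinset.mpr hc
  have hdecomp := f_eq_sum_translates k K ρ f S hS
  calc ((TL k K ρ (T ∘ₗ extL k K ρ) f : ↥(cInd k K ρ)) : G → V) x
      = ∑ c ∈ S, ((T (extL k K ρ ((f : G → V) (Quotient.out c))) : ↥(cInd k K ρ)) : G → V)
        (x * (Quotient.out c)⁻¹) := TFun_eq_sum k K ρ _ f S hS x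
    _ = ((T f : ↥(cInd k K ρ)) : G → V) x := by
        conv_rhs => rw [hdecomp]
        rw [map_sum]
        have : ((∑ c ∈ S, T (cIndRep k K ρ (Quotient.out c)⁻¹
            (extL k K ρ ((f : G → V) (Quotient.out c)))) : ↥(cInd k K ρ)) : G → V)
            = ∑ c ∈ S, ((T (cIndRep k K ρ (Quotient.out c)⁻¹
              (extL k K ρ ((f : G → V) (Quotient.out c)))) : ↥(cInd k K ρ)) : G → V) := by simp
        rw [this, Finset.sum_apply]
        refine Finset.sum_congr rfl fun c _ => ?_
        rw [hT (Quotient.out c)⁻¹]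
        rfl

theorem TL_extL (ρ : Representation k ↥K V) (Φ : V →ₗ[k] ↥(cInd k K ρ))
    (hΦ : ∀ (u : ↥K) (v : V), Φ (ρ u v) = cIndRep k K ρ ↑u (Φ v)) (v : V) :
    TL k K ρ Φ (extL k K ρ v) = Φ v := by
  refine Subtype.ext (funext fun x => ?_)
  have hS : ∀ c : QK K, ((extL k K ρ v : ↥(cInd k K ρ)) : G → V) (Quotient.out c) ≠ 0
      → c ∈ ({rmk K 1} : Finset (QK K)) := by
    intro c hc
    have hmem : Quotient.out c ∈ K := by
      by_contra hcon
      exact hc (dif_neg hcon)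
    refine Finset.mem_singleton.mpr ?_
    rw [← rmk_out K c]
    exact Quotient.sound (QuotientGroup.rightRel_apply.mpr (by simpa using K.inv_mem hmem))
  show TFun k K ρ Φ (extL k K ρ v) x = _
  rw [TFun_eq_sum k K ρ Φ _ ({rmk K 1} : Finset (QK K)) hS x, Finset.sum_singleton]
  obtain ⟨u, hu⟩ := exists_of_rmk_eq (rmk_out K (rmk K 1)).symm
  rw [mul_one] at hu
  have hval : ((extL k K ρ v : ↥(cInd k K ρ)) : G → V) (Quotient.out (rmk K 1)) = ρ u v := by
    show extFn k K ρ v _ = _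
    rw [hu]
    unfold extFn
    rw [dif_pos u.2]
  rw [hval, hΦ]
  show ((Φ v : ↥(cInd k K ρ)) : G → V) (x * (Quotient.out (rmk K 1))⁻¹ * ↑u) = _
  congr 1
  rw [hu]
  group

section Assemble

set_option maxHeartbeats 1000000
set_option synthInstance.maxHeartbeats 200000

/-- The direct sum of the Hom spaces. -/
abbrev DS (ρ : Representation k ↥K V) := DirectSum (DK K) (fun q => ↥(homKPart k K ρ q))

/-- Sum of the components of an element of the direct sum, as a map `V →ₗ cInd`. -/
noncomputable def sumHom (ρ : Representation k ↥K V) :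
    DS k K ρ →ₗ[k] (V →ₗ[k] ↥(cInd k K ρ)) :=
  DirectSum.toModule k (DK K) _ (fun q => (homKPart k K ρ q).subtype)

theorem sumHom_of (ρ : Representation k ↥K V) (q : DK K) (φ : ↥(homKPart k K ρ q)) :
    sumHom k K ρ (DirectSum.of _ q φ) = (φ : V →ₗ[k] ↥(cInd k K ρ)) := by
  rw [← DirectSum.lof_eq_of k, sumHom, DirectSum.toModule_lof]
  rfl

theorem sumHom_equivariant (ρ : Representation k ↥K V) (φs : DS k K ρ) (u : ↥K) (v : V) :
    sumHom k K ρ φs (ρ u v) = cIndRep k K ρ ↑u (sumHom k K ρ φs v) := by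
  induction φs using DirectSum.induction_on with
  | zero =>
    rw [map_zero]
    simp only [LinearMap.zero_apply, map_zero]
  | of q φ => rw [sumHom_of]; exact φ.2.2 u v
  | add x y hx hy => simp [map_add, hx, hy]

theorem compL_sumHom (ρ : Representation k ↥K V) (φs : DS k K ρ) (q : DK K) (v : V) :
    compL k K ρ q (sumHom k K ρ φs v)
      = ((φs q : V →ₗ[k] ↥(cInd k K ρ))) v := by
  induction φs using DirectSum.induction_on with
  | zero =>
    rw [map_zero]
    simp only [LinearMap.zero_apply, map_zero, DirectSum.zero_apply, Submodule.coe_zero]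
  | of q' φ =>
    rw [sumHom_of]
    by_cases hq : q' = q
    · subst hq
      rw [DirectSum.of_eq_same]
      exact compL_eq_self k K ρ q' _ (φ.2.1 v)
    · rw [DirectSum.of_eq_of_ne _ _ _ (Ne.symm hq),
        compL_eq_zero k K ρ hq _ (φ.2.1 v)]
      simp
  | add x y hx hy => simp [map_add, DirectSum.add_apply, hx, hy]

theorem sumHom_apply_eq_sum (ρ : Representation k ↥K V) (φs : DS k K ρ)
    (S : Finset (DK K)) (hS : ∀ q ∉ S, φs q = 0) (v : V) :
    sumHom k K ρ φs v = ∑ q ∈ S, ((φs q : V →ₗ[k] ↥(cInd k K ρ))) v := by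
  classical
  have hsub : DFinsupp.support φs ⊆ S := by
    intro q hq
    by_contra hc
    exact (DFinsupp.mem_support_iff.mp hq) (hS q hc)
  conv_lhs => rw [← DirectSum.sum_support_of φs]
  rw [map_sum, LinearMap.sum_apply]
  rw [Finset.sum_subset hsub]
  · refine Finset.sum_congr rfl fun q _ => ?_
    rw [sumHom_of]
  · intro q _ hq
    rw [DFinsupp.notMem_support_iff.mp hq]
    simp [sumHom_of]

/-- The Frobenius-reciprocity component of `T` at `q`. -/
noncomputable def EφAux (ρ : Representation k ↥K V)
    (T : ↥(cInd k K ρ) →ₗ[k] ↥(cInd k K ρ)) (q : DK K) : V →ₗ[k] ↥(cInd k K ρ) :=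
  compL k K ρ q ∘ₗ T ∘ₗ extL k K ρ

theorem EφAux_mem (ρ : Representation k ↥K V) (T : ↥(cInd k K ρ) →ₗ[k] ↥(cInd k K ρ))
    (hT : T ∈ endG k K ρ) (q : DK K) : EφAux k K ρ T q ∈ homKPart k K ρ q := by
  constructor
  · intro v
    exact compL_mem_dosetPart k K ρ q _
  · intro u v
    show compL k K ρ q (T (extL k K ρ (ρ u v))) = _
    rw [extL_equivariant, hT, compL_equivariant]
    rfl

variable {ι : Type} [Fintype ι]

/-- A finite set of double cosets supporting all components of `T`. -/
noncomputable def ST (ρ : Representation k ↥K V) (b : Module.Basis ι k V)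
    (T : ↥(cInd k K ρ) →ₗ[k] ↥(cInd k K ρ)) : Finset (DK K) :=
  Finset.univ.biUnion
    (fun i : ι => (dsupp_finite k K ρ (T (extL k K ρ (b i)))).toFinset)

theorem EφAux_eq_zero (ρ : Representation k ↥K V) (b : Module.Basis ι k V)
    (T : ↥(cInd k K ρ) →ₗ[k] ↥(cInd k K ρ)) (q : DK K) (hq : q ∉ ST k K ρ b T) :
    EφAux k K ρ T q = 0 := by
  refine LinearMap.ext fun v => ?_
  show compL k K ρ q (T (extL k K ρ v)) = 0
  conv_lhs => rw [← Module.Basis.sum_repr b v]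
  rw [map_sum, map_sum, map_sum]
  refine Finset.sum_eq_zero fun i _ => ?_
  rw [map_smul, map_smul, map_smul]
  have h0 : compL k K ρ q (T (extL k K ρ (b i))) = 0 := by
    refine compL_eq_zero_of_not_mem k K ρ q _ ?_
    intro hmem
    refine hq (Finset.mem_biUnion.mpr ⟨i, Finset.mem_univ i, ?_⟩)
    exact (dsupp_finite k K ρ (T (extL k K ρ (b i)))).mem_toFinset.mpr hmem
  rw [h0, smul_zero]

theorem compL_ne_zero_mem (ρ : Representation k ↥K V) (g : ↥(cInd k K ρ)) (q : DK K)
    (hq : q ∈ dmk K '' {x : G | (g : G → V) x ≠ 0}) : compL k K ρ q g ≠ 0 := by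
  obtain ⟨x, hx, rfl⟩ := hq
  intro h0
  have : ((compL k K ρ (dmk K x) g : ↥(cInd k K ρ)) : G → V) x = 0 := by rw [h0]; rfl
  rw [compL_apply, if_pos rfl] at this
  exact hx this

/-- The forward map `End_G(c-Ind) → ⊕ Hom_K(σ, σ(q))`. -/
noncomputable def Emap (ρ : Representation k ↥K V) (b : Module.Basis ι k V) :
    ↥(endG k K ρ) →ₗ[k] DS k K ρ where
  toFun T := DFinsupp.mk'
    (fun q => ⟨EφAux k K ρ (T : ↥(cInd k K ρ) →ₗ[k] ↥(cInd k K ρ)) q,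
      EφAux_mem k K ρ _ T.2 q⟩)
    (Trunc.mk ⟨(ST k K ρ b (T : ↥(cInd k K ρ) →ₗ[k] ↥(cInd k K ρ))).val, fun q => by
      refine (em (q ∈ (ST k K ρ b (T : ↥(cInd k K ρ) →ₗ[k] ↥(cInd k K ρ))).val)).imp id
        fun h => ?_
      refine Subtype.ext ?_
      exact EφAux_eq_zero k K ρ b _ q (fun hc => h (Finset.mem_val.mpr hc))⟩)
  map_add' T S := by
    refine DFinsupp.ext fun q => ?_
    rw [DirectSum.add_apply]
    refine Subtype.ext (LinearMap.ext fun v => ?_)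
    show compL k K ρ q (((T : ↥(cInd k K ρ) →ₗ[k] ↥(cInd k K ρ))
      + (S : ↥(cInd k K ρ) →ₗ[k] ↥(cInd k K ρ))) (extL k K ρ v)) = _
    rw [LinearMap.add_apply, map_add]
    rfl
  map_smul' a T := by
    refine DFinsupp.ext fun q => ?_
    refine Subtype.ext (LinearMap.ext fun v => ?_)
    show compL k K ρ q ((a • (T : ↥(cInd k K ρ) →ₗ[k] ↥(cInd k K ρ))) (extL k K ρ v)) = _
    rw [LinearMap.smul_apply, map_smul]
    rfl

theorem Emap_apply (ρ : Representation k ↥K V) (b : Module.Basis ι k V) (T : ↥(endG k K ρ))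
    (q : DK K) :
    ((Emap k K ρ b T q : ↥(homKPart k K ρ q)) : V →ₗ[k] ↥(cInd k K ρ))
      = EφAux k K ρ (T : ↥(cInd k K ρ) →ₗ[k] ↥(cInd k K ρ)) q := rfl

theorem TFun_add_left (ρ : Representation k ↥K V) (Φ Ψ : V →ₗ[k] ↥(cInd k K ρ))
    (f : ↥(cInd k K ρ)) (x : G) :
    TFun k K ρ (Φ + Ψ) f x = TFun k K ρ Φ f x + TFun k K ρ Ψ f x := by
  have hfin := rsupp_out_finite k K ρ f
  set S : Finset (QK K) := hfin.toFinset with hSdef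
  have hS : ∀ c : QK K, (f : G → V) (Quotient.out c) ≠ 0 → c ∈ S := fun c hc =>
    hfin.mem_toFinset.mpr hc
  rw [TFun_eq_sum k K ρ _ f S hS, TFun_eq_sum k K ρ Φ f S hS, TFun_eq_sum k K ρ Ψ f S hS,
    ← Finset.sum_add_distrib]
  rfl

theorem TFun_smul_left (ρ : Representation k ↥K V) (a : k) (Φ : V →ₗ[k] ↥(cInd k K ρ))
    (f : ↥(cInd k K ρ)) (x : G) :
    TFun k K ρ (a • Φ) f x = a • TFun k K ρ Φ f x := by
  have hfin := rsupp_out_finite k K ρ f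
  set S : Finset (QK K) := hfin.toFinset with hSdef
  have hS : ∀ c : QK K, (f : G → V) (Quotient.out c) ≠ 0 → c ∈ S := fun c hc =>
    hfin.mem_toFinset.mpr hc
  rw [TFun_eq_sum k K ρ _ f S hS, TFun_eq_sum k K ρ Φ f S hS, Finset.smul_sum]
  rfl

/-- The inverse map `⊕ Hom_K(σ, σ(q)) → End_G(c-Ind)`. -/
noncomputable def Fmap (ρ : Representation k ↥K V) : DS k K ρ →ₗ[k] ↥(endG k K ρ) where
  toFun φs := ⟨TL k K ρ (sumHom k K ρ φs),
    fun g f => TL_equivariant k K ρ _ (sumHom_equivariant k K ρ φs) g f⟩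
  map_add' φs ψs := by
    refine Subtype.ext (LinearMap.ext fun f => Subtype.ext (funext fun x => ?_))
    show TFun k K ρ (sumHom k K ρ (φs + ψs)) f x
      = TFun k K ρ (sumHom k K ρ φs) f x + TFun k K ρ (sumHom k K ρ ψs) f x
    rw [map_add]
    exact TFun_add_left k K ρ _ _ f x
  map_smul' a φs := by
    refine Subtype.ext (LinearMap.ext fun f => Subtype.ext (funext fun x => ?_))
    show TFun k K ρ (sumHom k K ρ (a • φs)) f x = a • TFun k K ρ (sumHom k K ρ φs) f x
    rw [map_smul]
    exact TFun_smul_left k K ρ a _ f x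

theorem Emap_Fmap (ρ : Representation k ↥K V) (b : Module.Basis ι k V) (φs : DS k K ρ) :
    Emap k K ρ b (Fmap k K ρ φs) = φs := by
  refine DFinsupp.ext fun q => ?_
  refine Subtype.ext (LinearMap.ext fun v => ?_)
  show compL k K ρ q (TL k K ρ (sumHom k K ρ φs) (extL k K ρ v)) = _
  rw [TL_extL k K ρ _ (sumHom_equivariant k K ρ φs) v, compL_sumHom]

theorem Fmap_Emap (ρ : Representation k ↥K V) (b : Module.Basis ι k V) (T : ↥(endG k K ρ)) :
    Fmap k K ρ (Emap k K ρ b T) = T := by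
  refine Subtype.ext ?_
  show TL k K ρ (sumHom k K ρ (Emap k K ρ b T)) = (T : ↥(cInd k K ρ) →ₗ[k] ↥(cInd k K ρ))
  have key : sumHom k K ρ (Emap k K ρ b T)
      = (T : ↥(cInd k K ρ) →ₗ[k] ↥(cInd k K ρ)) ∘ₗ extL k K ρ := by
    refine LinearMap.ext fun v => ?_
    set T' : ↥(cInd k K ρ) →ₗ[k] ↥(cInd k K ρ) := (T : ↥(cInd k K ρ) →ₗ[k] ↥(cInd k K ρ))
    rw [sumHom_apply_eq_sum k K ρ _ (ST k K ρ b T') (fun q hq => Subtype.ext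
      (EφAux_eq_zero k K ρ b T' q hq)) v]
    have hterm : ∀ q : DK K, ((Emap k K ρ b T q : ↥(homKPart k K ρ q))
        : V →ₗ[k] ↥(cInd k K ρ)) v = compL k K ρ q (T' (extL k K ρ v)) := fun q => rfl
    simp only [hterm]
    exact sum_compL k K ρ (T' (extL k K ρ v)) (ST k K ρ b T') (fun q hq => by
      by_contra hc
      exact compL_ne_zero_mem k K ρ _ q hq
        (LinearMap.ext_iff.mp (EφAux_eq_zero k K ρ b T' q hc) v))
  rw [key]
  exact endG_eq_TL k K ρ _ T.2

end Assemble

end Stmt16Aux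

/-- `End_{k[G]}(c-Ind_K^G σ) ≅ ⊕_{t ∈ K\G/K} Hom_{k[K]}(σ, σ(t))` as `k`-vector spaces. -/
theorem stmt16 {k : Type} [Field k] {G : Type} [Group G] (K : Subgroup G)
    {V : Type} [AddCommGroup V] [Module k V] [FiniteDimensional k V]
    (ρ : Representation k ↥K V) :
    Nonempty (↥(endG k K ρ) ≃ₗ[k]
      DirectSum (DoubleCoset.Quotient (↑K : Set G) ↑K) (fun q => ↥(homKPart k K ρ q))) := by
  let b : Module.Basis (Fin (Module.finrank k V)) k V := Module.finBasis k V
  exact ⟨LinearEquiv.ofLinear (Stmt16Aux.Emap k K ρ b) (Stmt16Aux.Fmap k K ρ)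
    (LinearMap.ext fun φs => Stmt16Aux.Emap_Fmap k K ρ b φs)
    (LinearMap.ext fun T => Stmt16Aux.Fmap_Emap k K ρ b T)⟩
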